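/- Let f and g be norms on ℝ^p, let g* denote the dual norm of g, let (a, b) be a linear classifier with a ≠ 0, let ρ > 0, let x_F ∈ ℝ^p satisfy ⟪a, x_F⟫ < b, and let x_RCF be an optimal robust counterfactual of x_F under f with robustness norm g and radius ρ, with x_RCF ≠ x_F. Assume f is differentiable at x_RCF − x_F with gradient h (i.e., HasGradientAt f h (x_RCF − x_F)). Define â := h and b̂ := ⟪â, x_RCF⟫ − ρ · g*(â). Then there exists λ ∈ ℝ with λ ≠ 0 such that â = λ • a and b̂ = λ · b; in other words, a single robust counterfactual query under a differentiable norm, together with the factual label, recovers the hyperplane up to nonzero scaling. -/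

import Mathlib

open RealInnerProductSpace

noncomputable section

/-- `f` is a norm on `EuclideanSpace ℝ (Fin p)`. -/
def IsNormE {p : ℕ} (f : EuclideanSpace ℝ (Fin p) → ℝ) : Prop :=
  (∀ x, f x = 0 ↔ x = 0) ∧ (∀ (c : ℝ) (x : EuclideanSpace ℝ (Fin p)), f (c • x) = |c| * f x) ∧
    (∀ x y, f (x + y) ≤ f x + f y)

/-- The dual norm `g*(w) = sup { ⟪w, v⟫ : g v ≤ 1 }`. -/
def dualNormE {p : ℕ} (g : EuclideanSpace ℝ (Fin p) → ℝ) (w : EuclideanSpace ℝ (Fin p)) : ℝ :=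
  sSup {t : ℝ | ∃ v : EuclideanSpace ℝ (Fin p), g v ≤ 1 ∧ t = ⟪w, v⟫}

/-- `xRCF` is an optimal robust counterfactual of the factual `xF` (classified 'No')
under norm `f`, with robustness norm `g` and radius `ρ`. -/
def IsOptRCFE {p : ℕ} (a : EuclideanSpace ℝ (Fin p)) (b : ℝ)
    (f g : EuclideanSpace ℝ (Fin p) → ℝ) (ρ : ℝ)
    (xF xRCF : EuclideanSpace ℝ (Fin p)) : Prop :=
  (∀ s : EuclideanSpace ℝ (Fin p), g s ≤ ρ → b ≤ ⟪a, xRCF + s⟫) ∧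
    ∀ z : EuclideanSpace ℝ (Fin p),
      (∀ s : EuclideanSpace ℝ (Fin p), g s ≤ ρ → b ≤ ⟪a, z + s⟫) →
        f (xRCF - xF) ≤ f (z - xF)

/-- A single robust counterfactual query under a differentiable norm, together with the
factual label, recovers the hyperplane up to nonzero scaling:
`â = ∇f(x_RCF − x_F)` and `b̂ = ⟪â, x_RCF⟫ − ρ·g*(â)` satisfy `â = λ • a`,
`b̂ = λ * b` for some `λ ≠ 0`. -/
theorem rcf_extraction_differentiable {p : ℕ} (hp : 1 ≤ p)
    (f g : EuclideanSpace ℝ (Fin p) → ℝ) (hf : IsNormE f) (hg : IsNormE g)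
    (a : EuclideanSpace ℝ (Fin p)) (ha : a ≠ 0) (b : ℝ) (ρ : ℝ) (hρ : 0 < ρ)
    (xF xRCF : EuclideanSpace ℝ (Fin p)) (hxF : ⟪a, xF⟫ < b)
    (hopt : IsOptRCFE a b f g ρ xF xRCF) (hne : xRCF ≠ xF)
    (h : EuclideanSpace ℝ (Fin p)) (hgrad : HasGradientAt f h (xRCF - xF)) :
    ∃ l : ℝ, l ≠ 0 ∧ h = l • a ∧ ⟪h, xRCF⟫ - ρ * dualNormE g h = l * b := by
  obtain ⟨hf0, hfh, hft⟩ := hf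
  obtain ⟨hg0, hgh, hgt⟩ := hg
  set d : EuclideanSpace ℝ (Fin p) := xRCF - xF with hd
  have hd0 : d ≠ 0 := sub_ne_zero.mpr hne
  have hg00 : g 0 = 0 := (hg0 0).mpr rfl
  have hf_nonneg : ∀ x, 0 ≤ f x := by
    intro x
    have h1 : f (x + (-1 : ℝ) • x) = 0 := by
      rw [show x + (-1 : ℝ) • x = 0 by simp]
      exact (hf0 0).mpr rfl
    have h2 := hft x ((-1 : ℝ) • x)
    rw [h1, hfh (-1) x] at h2
    simp at h2
    linarith
  have hfd_pos : 0 < f d := by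
    rcases lt_or_eq_of_le (hf_nonneg d) with h' | h'
    · exact h'
    · exact absurd ((hf0 d).mp h'.symm) hd0
  -- the dual norm set for `a`
  set S : Set ℝ := {t : ℝ | ∃ v : EuclideanSpace ℝ (Fin p), g v ≤ 1 ∧ t = ⟪a, v⟫} with hS
  have hS0 : (0 : ℝ) ∈ S := ⟨0, by simp [hg00], by simp⟩
  have hS_ne : S.Nonempty := ⟨0, hS0⟩
  have hbound : ∀ t ∈ S, t ≤ (⟪a, xRCF⟫ - b) / ρ := by
    rintro t ⟨v, hv1, rfl⟩
    have hs : g ((-ρ) • v) ≤ ρ := by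
      rw [hgh, abs_neg, abs_of_pos hρ]
      nlinarith
    have := hopt.1 ((-ρ) • v) hs
    rw [inner_add_right, real_inner_smul_right] at this
    rw [le_div_iff₀ hρ]
    nlinarith
  have hS_bdd : BddAbove S := ⟨_, hbound⟩
  set G : ℝ := sSup S with hG
  have hG_nonneg : 0 ≤ G := le_csSup hS_bdd hS0
  -- every allowed perturbation satisfies `⟪a, s⟫ ≥ -(ρ * G)`
  have hkey : ∀ s : EuclideanSpace ℝ (Fin p), g s ≤ ρ → -(ρ * G) ≤ ⟪a, s⟫ := by
    intro s hs
    have hv1 : g (ρ⁻¹ • (-s)) ≤ 1 := by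
      have hns : g (-s) = g s := by
        rw [show (-s : EuclideanSpace ℝ (Fin p)) = (-1 : ℝ) • s by simp, hgh]
        simp
      rw [hgh, hns, abs_of_pos (inv_pos.mpr hρ)]
      rw [inv_mul_le_iff₀ hρ]
      simpa using hs
    have hmem : ⟪a, ρ⁻¹ • (-s)⟫ ∈ S := ⟨_, hv1, rfl⟩
    have hle := le_csSup hS_bdd hmem
    rw [real_inner_smul_right, inner_neg_right] at hle
    have := (mul_le_mul_iff_right₀ hρ).mpr hle
    rw [← mul_assoc, mul_inv_cancel₀ (ne_of_gt hρ), one_mul] at this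
    linarith
  -- xRCF lies on the shifted boundary: ⟪a, xRCF⟫ = b + ρ * G
  have hge : b + ρ * G ≤ ⟪a, xRCF⟫ := by
    have := csSup_le hS_ne hbound
    rw [← hG, le_div_iff₀ hρ] at this
    nlinarith
  have hboundary : ⟪a, xRCF⟫ = b + ρ * G := by
    by_contra hc
    have hgt : b + ρ * G < ⟪a, xRCF⟫ := lt_of_le_of_ne hge (fun h' => hc h'.symm)
    have had' : ⟪a, d⟫ = ⟪a, xRCF⟫ - ⟪a, xF⟫ := by
      rw [hd, inner_sub_right]
    have had_pos : 0 < ⟪a, d⟫ := by rw [had']; nlinarith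
    set t0 : ℝ := (b + ρ * G - ⟪a, xF⟫) / ⟪a, d⟫ with ht0
    have ht0_pos : 0 < t0 := div_pos (by nlinarith) had_pos
    have ht0_lt : t0 < 1 := by
      rw [ht0, div_lt_one had_pos, had']
      nlinarith
    have ht0d : t0 * ⟪a, d⟫ = b + ρ * G - ⟪a, xF⟫ :=
      div_mul_cancel₀ _ (ne_of_gt had_pos)
    have hfeas : ∀ s : EuclideanSpace ℝ (Fin p), g s ≤ ρ →
        b ≤ ⟪a, (xF + t0 • d) + s⟫ := by
      intro s hs
      have := hkey s hs
      rw [inner_add_right, inner_add_right, real_inner_smul_right]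
      nlinarith
    have hcmp := hopt.2 (xF + t0 • d) hfeas
    rw [show xF + t0 • d - xF = t0 • d by abel] at hcmp
    rw [hfh t0 d, abs_of_pos ht0_pos] at hcmp
    nlinarith
  have had_pos : 0 < ⟪a, d⟫ := by
    rw [hd, inner_sub_right, hboundary]
    nlinarith
  -- directional derivatives
  have hdir : ∀ v : EuclideanSpace ℝ (Fin p),
      HasDerivAt (fun t : ℝ => f (d + t • v)) ⟪h, v⟫ 0 := by
    intro v
    have hF := hgrad.hasFDerivAt
    have hc : HasDerivAt (fun t : ℝ => d + t • v) v 0 := by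
      simpa using ((hasDerivAt_id (0 : ℝ)).smul_const v).const_add d
    have hF' : HasFDerivAt f ((InnerProductSpace.toDual ℝ _) h)
        ((fun t : ℝ => d + t • v) 0) := by simpa using hF
    have hcomp := hF'.comp_hasDerivAt 0 hc
    simp only [InnerProductSpace.toDual_apply_apply] at hcomp
    exact hcomp
  -- ⟪h, v⟫ = 0 whenever ⟪a, v⟫ = 0
  have hperp : ∀ v : EuclideanSpace ℝ (Fin p), ⟪a, v⟫ = 0 → ⟪h, v⟫ = 0 := by
    intro v hav
    have hmin : IsLocalMin (fun t : ℝ => f (d + t • v)) 0 := by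
      apply Filter.Eventually.of_forall
      intro t
      have hfeas : ∀ s : EuclideanSpace ℝ (Fin p), g s ≤ ρ →
          b ≤ ⟪a, (xRCF + t • v) + s⟫ := by
        intro s hs
        have := hopt.1 s hs
        rw [inner_add_right, inner_add_right, real_inner_smul_right, hav]
        rw [inner_add_right] at this
        linarith
      have := hopt.2 (xRCF + t • v) hfeas
      rw [show xRCF + t • v - xF = d + t • v by rw [hd]; abel] at this
      simpa using this
    exact hmin.hasDerivAt_eq_zero (hdir v)
  -- ⟪h, d⟫ = f d
  have hhd : ⟪h, d⟫ = f d := by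
    have h1 := hdir d
    have h2 : HasDerivAt (fun t : ℝ => (1 + t) * f d) (f d) 0 := by
      simpa using ((hasDerivAt_id (0 : ℝ)).const_add 1).mul_const (f d)
    have heq : (fun t : ℝ => f (d + t • d)) =ᶠ[nhds 0] fun t : ℝ => (1 + t) * f d := by
      filter_upwards [Metric.ball_mem_nhds (0 : ℝ) one_pos] with t ht
      have ht' : |t| < 1 := by simpa [Real.dist_eq] using ht
      have : d + t • d = (1 + t) • d := by
        rw [add_smul, one_smul]
      rw [this, hfh, abs_of_pos (by cases abs_lt.mp ht'; linarith)]
    have h2' : HasDerivAt (fun t : ℝ => f (d + t • d)) (f d) 0 :=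
      h2.congr_of_eventuallyEq heq
    exact h1.unique h2'
  -- h = l • a
  have haa : ⟪a, a⟫ ≠ 0 := fun hc => ha ((inner_self_eq_zero (𝕜 := ℝ)).mp hc)
  set l : ℝ := ⟪a, h⟫ / ⟪a, a⟫ with hl
  have hva : ⟪a, h - l • a⟫ = 0 := by
    rw [inner_sub_right, real_inner_smul_right, hl, div_mul_cancel₀ _ haa, sub_self]
  have hha : h = l • a := by
    have hv := hperp _ hva
    have : ⟪h - l • a, h - l • a⟫ = 0 := by
      rw [inner_sub_left, real_inner_smul_left, hva, hv]
      ring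
    have := (inner_self_eq_zero (𝕜 := ℝ)).mp this
    rwa [sub_eq_zero] at this
  have hl_pos : 0 < l := by
    have hmul : l * ⟪a, d⟫ = f d := by
      rw [← hhd, hha, real_inner_smul_left]
    have h2 := div_pos hfd_pos had_pos
    rwa [← hmul, mul_div_assoc, div_self (ne_of_gt had_pos), mul_one] at h2
  -- dual norm scaling: dualNormE g h = l * G
  set S' : Set ℝ := {t : ℝ | ∃ v : EuclideanSpace ℝ (Fin p), g v ≤ 1 ∧ t = ⟪h, v⟫} with hS'
  have hS'eq : S' = (fun t => l * t) '' S := by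
    ext t
    constructor
    · rintro ⟨v, hv, rfl⟩
      exact ⟨⟪a, v⟫, ⟨v, hv, rfl⟩, by rw [hha, real_inner_smul_left]⟩
    · rintro ⟨t', ⟨v, hv, rfl⟩, rfl⟩
      exact ⟨v, hv, by rw [hha, real_inner_smul_left]⟩
  have hS'_ne : S'.Nonempty := by
    rw [hS'eq]; exact ⟨l * 0, 0, hS0, rfl⟩
  have hub : ∀ t ∈ S', t ≤ l * G := by
    rw [hS'eq]; rintro _ ⟨t, ht, rfl⟩
    exact mul_le_mul_of_nonneg_left (le_csSup hS_bdd ht) hl_pos.le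
  have hdual : dualNormE g h = l * G := by
    have hrfl : dualNormE g h = sSup S' := rfl
    rw [hrfl]
    refine le_antisymm (csSup_le hS'_ne hub) ?_
    have hGle : G ≤ sSup S' / l := by
      apply csSup_le hS_ne
      intro t ht
      rw [le_div_iff₀ hl_pos, mul_comm]
      exact le_csSup ⟨l * G, hub⟩ (by rw [hS'eq]; exact ⟨t, ht, rfl⟩)
    calc l * G ≤ l * (sSup S' / l) := mul_le_mul_of_nonneg_left hGle hl_pos.le
      _ = sSup S' := by field_simp
  refine ⟨l, ne_of_gt hl_pos, hha, ?_⟩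
  rw [hdual, hha, real_inner_smul_left, hboundary]
  ring
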